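/- Let (𝕍, ω) be a symplectic vector space with a Lagrangian decomposition 𝕍 = L₁ ⊕ L₂, and let A ⊆ 𝕍 be a Lagrangian subspace. Then the kernel (radical) of the symmetric bilinear form q^A(x,y) = ω(pr₁(x), pr₂(y)) on A equals (A ∩ L₁) ⊕ (A ∩ L₂). -/

import Mathlib

/-- Let `(𝕍, ω)` be a symplectic vector space with a Lagrangian decomposition
`𝕍 = L₁ ⊕ L₂`, and let `A ⊆ 𝕍` be a Lagrangian subspace. Then the kernel (radical) of the
symmetric bilinear form `q^A(x,y) = ω(pr₁ x, pr₂ y)` on `A` equals `(A ∩ L₁) ⊕ (A ∩ L₂)`. -/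
theorem stmt_1 {k V : Type*} [Field k] [AddCommGroup V] [Module k V] [FiniteDimensional k V]
    (ω : LinearMap.BilinForm k V) (halt : ω.IsAlt) (hnd : ω.Nondegenerate)
    (L₁ L₂ A : Submodule k V)
    (hL₁ : ω.orthogonal L₁ = L₁) (hL₂ : ω.orthogonal L₂ = L₂) (hA : ω.orthogonal A = A)
    (h : IsCompl L₁ L₂) :
    ∀ y ∈ A,
      ((∀ x ∈ A,
          ω (Submodule.linearProjOfIsCompl L₁ L₂ h x)
            (Submodule.linearProjOfIsCompl L₂ L₁ h.symm y) = 0)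
        ↔ y ∈ (A ⊓ L₁) ⊔ (A ⊓ L₂)) := by
  intro y hy
  set p₁ : V →ₗ[k] L₁ := Submodule.linearProjOfIsCompl L₁ L₂ h
  set p₂ : V →ₗ[k] L₂ := Submodule.linearProjOfIsCompl L₂ L₁ h.symm
  have hsum : ∀ x : V, (p₁ x : V) + (p₂ x : V) = x := fun x =>
    Submodule.projection_add_projection_eq_self h x
  -- key rewriting: ω (p₁ x) (p₂ y) = ω x (p₂ y)
  have key : ∀ x : V, ω (p₁ x) (p₂ y) = ω x (p₂ y) := by
    intro x
    have h2 : ω (p₂ x) (p₂ y) = 0 := by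
      have hmem : ((p₂ y : V)) ∈ ω.orthogonal L₂ := hL₂.symm ▸ (p₂ y).2
      exact hmem (p₂ x) (p₂ x).2
    calc ω (p₁ x) (p₂ y) = ω ((p₁ x : V) + (p₂ x : V)) (p₂ y) - ω (p₂ x) (p₂ y) := by
          simp [map_add]
      _ = ω x (p₂ y) := by rw [hsum, h2, sub_zero]
  constructor
  · intro hq
    have hzA : ((p₂ y : V)) ∈ A := by
      rw [← hA]
      intro n hn
      have := hq n hn
      rw [key n] at this
      exact this
    refine Submodule.mem_sup.2 ⟨y - p₂ y, ⟨A.sub_mem hy hzA, ?_⟩, (p₂ y : V), ⟨hzA, (p₂ y).2⟩, by abel⟩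
    have : (y : V) - (p₂ y : V) = (p₁ y : V) := by
      rw [eq_comm, eq_sub_iff_add_eq]; exact hsum y
    rw [this]; exact (p₁ y).2
  · intro hmem x hx
    rw [key x]
    obtain ⟨a, ⟨haA, haL₁⟩, b, ⟨hbA, hbL₂⟩, rfl⟩ := Submodule.mem_sup.1 hmem
    have hpa : (p₂ a : V) = 0 := by
      exact congrArg Subtype.val (Submodule.projectionOnto_apply_of_mem_right h.symm haL₁)
    have hpb : (p₂ b : V) = b := by
      exact congrArg (Subtype.val)
        (Submodule.projectionOnto_apply_left h.symm ⟨b, hbL₂⟩)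
    have : ((p₂ (a + b) : V)) = b := by rw [map_add]; push_cast; rw [hpa, hpb, zero_add]
    rw [this]
    -- ω x b = 0 since x, b ∈ A Lagrangian
    have : b ∈ ω.orthogonal A := hA.symm ▸ hbA
    exact this x hx
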